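/- Let σ be an n-simplex (n ≥ 1) with vertices v_0, …, v_n in a Euclidean space. Then σ is n-well-centered if and only if for each i = 0, 1, …, n, the vertex v_i lies strictly outside the equatorial ball of the facet opposite v_i; that is, if and only if for each i, dist(v_i, c(F_i)) > R(F_i), where F_i is the facet of σ opposite v_i. -/

import Mathlib

open EuclideanGeometry RealInnerProductSpace

variable {E : Type*} [NormedAddCommGroup E] [InnerProductSpace ℝ E] [FiniteDimensional ℝ E]

/-- The facet of an `(n+1)`-simplex opposite vertex `i`. -/
noncomputable def Affine.Simplex.facetOpp {n : ℕ} (σ : Affine.Simplex ℝ E (n + 1))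
    (i : Fin (n + 2)) : Affine.Simplex ℝ E n :=
  σ.face (fs := {i}ᶜ)
    (by rw [Finset.card_compl, Finset.card_singleton, Fintype.card_fin]; rfl)

/-- A simplex is well-centered if its circumcenter is a positive affine
combination of its vertices, i.e. lies in the interior of the simplex. -/
def Affine.Simplex.WellCentered {n : ℕ} (σ : Affine.Simplex ℝ E n) : Prop :=
  ∃ w : Fin (n + 1) → ℝ, (∀ j, 0 < w j) ∧ (∑ j, w j = 1) ∧
    σ.circumcenter = Finset.univ.affineCombination ℝ σ.points w

/-- The signed distance from the circumcenter of `σ` to the hyperplane spanned by the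
facet opposite vertex `i`, positive when the circumcenter is on the same side as vertex `i`. -/
noncomputable def Affine.Simplex.signedDist {n : ℕ} (σ : Affine.Simplex ℝ E (n + 1))
    (i : Fin (n + 2)) : ℝ :=
  ⟪σ.circumcenter - ((σ.facetOpp i).circumcenter : E),
      σ.points i - (((σ.facetOpp i).orthogonalProjectionSpan (σ.points i) : E))⟫ /
    ‖σ.points i - (((σ.facetOpp i).orthogonalProjectionSpan (σ.points i) : E))‖

lemma facetOpp_range {n : ℕ} (σ : Affine.Simplex ℝ E (n + 1)) (i : Fin (n + 2)) :
    Set.range (σ.facetOpp i).points = σ.points '' (Set.univ \ {i}) := by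
  rw [Affine.Simplex.facetOpp, Affine.Simplex.range_face_points]
  congr 1
  simp [Set.ext_iff]

lemma facetOpp_mem {n : ℕ} (σ : Affine.Simplex ℝ E (n + 1)) {i j : Fin (n + 2)} (h : j ≠ i) :
    σ.points j ∈ affineSpan ℝ (Set.range (σ.facetOpp i).points) := by
  rw [facetOpp_range]
  exact mem_affineSpan ℝ ⟨j, by simp [h], rfl⟩

lemma facetOpp_not_mem {n : ℕ} (σ : Affine.Simplex ℝ E (n + 1)) (i : Fin (n + 2)) :
    σ.points i ∉ affineSpan ℝ (Set.range (σ.facetOpp i).points) := by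
  rw [facetOpp_range]
  exact σ.independent.notMem_affineSpan_diff i Set.univ

lemma key {n : ℕ} (σ : Affine.Simplex ℝ E (n + 1)) (i : Fin (n + 2))
    (w : Fin (n + 2) → ℝ) (hw : ∑ j, w j = 1)
    (hc : σ.circumcenter = Finset.univ.affineCombination ℝ σ.points w) :
    2 * w i * ‖σ.points i - ((σ.facetOpp i).orthogonalProjectionSpan (σ.points i) : E)‖ ^ 2 =
      dist (σ.points i) (σ.facetOpp i).circumcenter ^ 2 - (σ.facetOpp i).circumradius ^ 2 := by
  set F := σ.facetOpp i with hF
  set c : E := σ.circumcenter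
  set ci : E := F.circumcenter
  set v : E := σ.points i
  set p : E := (F.orthogonalProjectionSpan v : E)
  -- the orthogonal projection of c is ci
  have hproj : (F.orthogonalProjectionSpan c : E) = ci := by
    rw [hF, Affine.Simplex.facetOpp]
    exact σ.orthogonalProjection_circumcenter _
  have hci_mem : ci ∈ affineSpan ℝ (Set.range F.points) := F.circumcenter_mem_affineSpan
  -- c - ci orthogonal to the facet direction
  have hperp_c : c - ci ∈ (affineSpan ℝ (Set.range F.points)).directionᗮ := by
    have := vsub_orthogonalProjection_mem_direction_orthogonal
      (affineSpan ℝ (Set.range F.points)) c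
    rwa [show ((orthogonalProjection (affineSpan ℝ (Set.range F.points)) c : E)) = ci from hproj,
      vsub_eq_sub] at this
  have hperp_v : v - p ∈ (affineSpan ℝ (Set.range F.points)).directionᗮ := by
    have := vsub_orthogonalProjection_mem_direction_orthogonal
      (affineSpan ℝ (Set.range F.points)) v
    rwa [vsub_eq_sub] at this
  have hp_mem : p ∈ affineSpan ℝ (Set.range F.points) :=
    orthogonalProjection_mem v
  -- Step 1 : ⟪c - ci, v - p⟫ = w i * ‖v - p‖ ^ 2
  have hcombo : c - ci = ∑ j, w j • (σ.points j - ci) := by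
    rw [hc, Finset.univ.affineCombination_eq_weightedVSubOfPoint_vadd_of_sum_eq_one w σ.points
      hw ci]
    simp [Finset.weightedVSubOfPoint_apply, vsub_eq_sub, vadd_eq_add]
  have hstep1 : ⟪c - ci, v - p⟫ = w i * ‖v - p‖ ^ 2 := by
    rw [hcombo, sum_inner]
    rw [Finset.sum_eq_single i]
    · rw [real_inner_smul_left]
      have : σ.points i - ci = (v - p) + (p - ci) := by abel
      rw [this, inner_add_left, real_inner_self_eq_norm_sq]
      have hz : ⟪p - ci, v - p⟫ = 0 :=
        Submodule.inner_right_of_mem_orthogonal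
          (AffineSubspace.vsub_mem_direction hp_mem hci_mem) hperp_v
      rw [hz]; ring
    · intro j _ hj
      rw [real_inner_smul_left]
      have hz : ⟪σ.points j - ci, v - p⟫ = 0 :=
        Submodule.inner_right_of_mem_orthogonal
          (AffineSubspace.vsub_mem_direction (facetOpp_mem σ hj) hci_mem) hperp_v
      rw [hz, mul_zero]
    · simp
  -- Step 2 : ⟪c - ci, v - p⟫ = ⟪c - ci, v - ci⟫
  have hstep2 : ⟪c - ci, v - p⟫ = ⟪c - ci, v - ci⟫ := by
    have : v - ci = (v - p) + (p - ci) := by abel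
    rw [this, inner_add_right]
    have hz : ⟪c - ci, p - ci⟫ = 0 :=
      Submodule.inner_left_of_mem_orthogonal
        (AffineSubspace.vsub_mem_direction hp_mem hci_mem) hperp_c
    rw [hz, add_zero]
  -- Step 3 : 2 ⟪c - ci, v - ci⟫ = d^2 - r^2
  have hR : dist v c = σ.circumradius := σ.dist_circumcenter_eq_circumradius i
  -- R^2 = r^2 + ‖c - ci‖^2
  have hfacet0 : dist (F.points 0) c = σ.circumradius := by
    rw [hF, Affine.Simplex.facetOpp, Affine.Simplex.face_points]
    exact σ.dist_circumcenter_eq_circumradius _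
  have hpyth : σ.circumradius ^ 2 = F.circumradius ^ 2 + ‖c - ci‖ ^ 2 := by
    have := F.dist_sq_eq_dist_orthogonalProjection_sq_add_dist_orthogonalProjection_sq c
      (mem_affineSpan ℝ (Set.mem_range_self 0))
    rw [hfacet0, hproj] at this
    rw [F.dist_circumcenter_eq_circumradius 0] at this
    have hd : dist c ci = ‖c - ci‖ := by rw [dist_eq_norm]
    rw [hd] at this
    nlinarith [this]
  have hexpand : σ.circumradius ^ 2 =
      dist v ci ^ 2 - 2 * ⟪c - ci, v - ci⟫ + ‖c - ci‖ ^ 2 := by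
    rw [← hR, dist_eq_norm, dist_eq_norm]
    have : v - c = (v - ci) - (c - ci) := by abel
    rw [this, norm_sub_sq_real]
    rw [real_inner_comm]
  have hstep3 : 2 * ⟪c - ci, v - ci⟫ = dist v ci ^ 2 - F.circumradius ^ 2 := by
    nlinarith [hpyth, hexpand]
  rw [← hstep3, ← hstep2, hstep1]; ring

/-- An `(n+1)`-simplex is well-centered iff every vertex lies strictly
outside the equatorial ball of the opposite facet. -/
theorem wellCentered_iff_vertices_outside_equatorial_balls {n : ℕ}
    (σ : Affine.Simplex ℝ E (n + 1)) :
    σ.WellCentered ↔ ∀ i : Fin (n + 2),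
      dist (σ.points i) (σ.facetOpp i).circumcenter > (σ.facetOpp i).circumradius := by
  have hnorm : ∀ i : Fin (n + 2),
      0 < ‖σ.points i - ((σ.facetOpp i).orthogonalProjectionSpan (σ.points i) : E)‖ ^ 2 := by
    intro i
    have hne : σ.points i - ((σ.facetOpp i).orthogonalProjectionSpan (σ.points i) : E) ≠ 0 := by
      intro h
      apply facetOpp_not_mem σ i
      have : σ.points i = ((σ.facetOpp i).orthogonalProjectionSpan (σ.points i) : E) :=
        sub_eq_zero.mp h
      rw [this]
      exact orthogonalProjection_mem _
    exact pow_pos (norm_pos_iff.mpr hne) 2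
  constructor
  · rintro ⟨w, hpos, hw, hc⟩ i
    have hk := key σ i w hw hc
    have : 0 < dist (σ.points i) (σ.facetOpp i).circumcenter ^ 2 -
        (σ.facetOpp i).circumradius ^ 2 := by
      rw [← hk]
      have h1 := hpos i
      have h2 := hnorm i
      nlinarith
    have hr := (σ.facetOpp i).circumradius_nonneg
    nlinarith [dist_nonneg (x := σ.points i) (y := ((σ.facetOpp i).circumcenter : E))]
  · intro h
    obtain ⟨w, hw, hc⟩ := eq_affineCombination_of_mem_affineSpan_of_fintype
      σ.circumcenter_mem_affineSpan
    refine ⟨w, fun i => ?_, hw, hc⟩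
    have hk := key σ i w hw hc
    have hr := (σ.facetOpp i).circumradius_nonneg
    have hd := h i
    nlinarith [hnorm i, hk]
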